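/- The map $a_- : \mathrm{Homeo}_0(\mathbb{S}^1) \to \mathrm{Homeo}(\mathbb{A})$ defined by $a_-(f)(r, \theta) = (\tilde{f}(\tilde{\theta}) - \tilde{f}(\tilde{\theta} - r), f(\theta))$ is a group homomorphism. -/

import Mathlib

noncomputable section

/-- The circle `ℝ/ℤ`. -/
abbrev S1 : Type := AddCircle (1 : ℝ)

/-- The projection `ℝ → ℝ/ℤ`. -/
def pr : ℝ → S1 := fun x => (x : S1)

instance : Fact ((0 : ℝ) < 1) := ⟨one_pos⟩

/-- A canonical representative (lift in `[0,1)`) of a point of the circle. -/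
def rep (θ : S1) : ℝ := (AddCircle.equivIco 1 0 θ : ℝ)

/-- `F` is a lift of the circle homeomorphism `f`: an increasing homeomorphism of `ℝ`
commuting with integer translations and projecting to `f`. -/
def IsLift (f : S1 ≃ₜ S1) (F : ℝ ≃ₜ ℝ) : Prop :=
  StrictMono F ∧ (∀ x : ℝ, F (x + 1) = F x + 1) ∧ ∀ x : ℝ, f (pr x) = pr (F x)

/-- The elementary action `a₋` on the annulus `[0,1] × S¹ ⊆ ℝ × S¹`, computed using the
lift `F` of `f`:  `(r, θ) ↦ (F(θ̃) - F(θ̃ - r), f θ)` (the first coordinate does not depend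
on the chosen lifts). -/
def aMinus (f : S1 ≃ₜ S1) (F : ℝ ≃ₜ ℝ) : ℝ × S1 → ℝ × S1 :=
  fun p => (F (rep p.2) - F (rep p.2 - p.1), f p.2)

/-- The elementary action `a₊` on the annulus `[0,1] × S¹ ⊆ ℝ × S¹`:
`(r, θ) ↦ (F(θ̃ + r) - F(θ̃), f θ)`. -/
def aPlus (f : S1 ≃ₜ S1) (F : ℝ ≃ₜ ℝ) : ℝ × S1 → ℝ × S1 :=
  fun p => (F (rep p.2 + p.1) - F (rep p.2), f p.2)

lemma lift_add_int (F : ℝ ≃ₜ ℝ) (h : ∀ x : ℝ, F (x + 1) = F x + 1) (x : ℝ) (n : ℤ) :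
    F (x + n) = F x + n := by
  induction n using Int.induction_on with
  | zero => simp
  | succ k ih =>
      have := h (x + k)
      push_cast at ih this ⊢
      rw [show x + ((k:ℝ) + 1) = x + k + 1 by ring]
      linarith
  | pred k ih =>
      have := h (x + (-(k:ℝ) - 1))
      have h2 : x + (-(k:ℝ) - 1) + 1 = x + -(k:ℝ) := by ring
      rw [h2] at this
      push_cast at ih this ⊢
      linarith

lemma rep_pr (x : ℝ) : rep (pr x) = Int.fract x := by
  have := AddCircle.coe_equivIco_mk_apply (p := (1:ℝ)) x
  simpa [rep, pr] using this

/-- The map `a₋` is a group homomorphism: `a₋(f ∘ g) = a₋(f) ∘ a₋(g)` on the annulus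
(`F` and `G` being lifts of `f` and `g`, `F ∘ G` is a lift of `f ∘ g`). -/
theorem stmt2 (f g : S1 ≃ₜ S1) (F G : ℝ ≃ₜ ℝ) (hF : IsLift f F) (hG : IsLift g G)
    (p : ℝ × S1) (hp : p.1 ∈ Set.Icc (0 : ℝ) 1) :
    aMinus (g.trans f) (G.trans F) p = aMinus f F (aMinus g G p) := by
  obtain ⟨r, θ⟩ := p
  obtain ⟨_, hF1, hFpr⟩ := hF
  obtain ⟨_, hG1, hGpr⟩ := hG
  simp only [aMinus, Homeomorph.trans_apply, Prod.mk.injEq]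
  refine ⟨?_, trivial⟩
  set x := rep θ with hx
  have hθ : pr x = θ := by
    have : ((AddCircle.equivIco 1 0 θ : ℝ) : S1) = θ := (AddCircle.equivIco 1 0).symm_apply_apply θ
    simpa [pr, hx, rep] using this
  have hrepg : rep (g θ) = G x - ⌊G x⌋ := by
    rw [← hθ, hGpr x, rep_pr, Int.self_sub_floor]
  rw [hrepg]
  have h1 : G x - ↑⌊G x⌋ = G x + ↑(-⌊G x⌋) := by push_cast; ring
  have h2 : G x - ↑⌊G x⌋ - (G x - G (x - r)) = G (x - r) + ↑(-⌊G x⌋) := by push_cast; ring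
  rw [h2, h1, lift_add_int F hF1, lift_add_int F hF1]
  push_cast; ring
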